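/- arXiv:2408.07223 — 5 statements merged into one kernel-verified Lean document; each statement's English description precedes it below -/
import Mathlib

section
/- Let K and H be finitely generated groups, each containing a nilpotent subgroup of finite index (i.e., finitely generated virtually nilpotent groups). Then the restricted wreath product K ≀ H is virtually nilpotent if and only if H is finite or K is trivial. -/
/-- The base group of the restricted wreath product `K ≀ H`: the subgroup of `H → K`
consisting of functions with finite multiplicative support, under pointwise
multiplication. -/
def wreathBase (K H : Type*) [Group K] [Group H] : Subgroup (H → K) where
  carrier := {f | (Function.mulSupport f).Finite}
  one_mem' := by simp [Function.mulSupport_one]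
  mul_mem' := by
    intro f g hf hg
    exact (hf.union hg).subset (Function.mulSupport_mul f g)
  inv_mem' := by
    intro f hf
    simpa [Function.mulSupport_inv] using hf

/-- The shift of a finitely supported function by an element of `H`:
`(h • f) x = f (h⁻¹ * x)`. -/
def wreathShiftEquiv (K H : Type*) [Group K] [Group H] (h : H) :
    wreathBase K H ≃* wreathBase K H where
  toFun f := ⟨fun x => f.1 (h⁻¹ * x), by
    show (Function.mulSupport fun x => f.1 (h⁻¹ * x)).Finite
    have h1 : Function.mulSupport (fun x => f.1 (h⁻¹ * x))
        = (fun x : H => h⁻¹ * x) ⁻¹' Function.mulSupport f.1 := rfl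
    rw [h1]
    exact f.2.preimage fun a _ b _ hab => mul_left_cancel hab⟩
  invFun f := ⟨fun x => f.1 (h * x), by
    show (Function.mulSupport fun x => f.1 (h * x)).Finite
    have h1 : Function.mulSupport (fun x => f.1 (h * x))
        = (fun x : H => h * x) ⁻¹' Function.mulSupport f.1 := rfl
    rw [h1]
    exact f.2.preimage fun a _ b _ hab => mul_left_cancel hab⟩
  left_inv f := Subtype.ext (funext fun x => by simp)
  right_inv f := Subtype.ext (funext fun x => by simp)
  map_mul' f g := rfl

/-- The action of `H` on the base group of the restricted wreath product,
by left translation of the argument. -/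
def wreathAction (K H : Type*) [Group K] [Group H] : H →* MulAut (wreathBase K H) where
  toFun := wreathShiftEquiv K H
  map_one' := MulEquiv.ext fun f => Subtype.ext (funext fun x => by
    simp [wreathShiftEquiv])
  map_mul' a b := MulEquiv.ext fun f => Subtype.ext (funext fun x => by
    simp [wreathShiftEquiv, mul_assoc])

/-- The restricted wreath product `K ≀ H`. -/
abbrev Wreath (K H : Type*) [Group K] [Group H] :=
  wreathBase K H ⋊[wreathAction K H] H

/-- A group is virtually nilpotent if it has a nilpotent subgroup of finite index. -/
def VirtuallyNilpotent (G : Type*) [Group G] : Prop :=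
  ∃ N : Subgroup G, N.FiniteIndex ∧ Group.IsNilpotent N

-- auxiliary lemmas

lemma aux_finiteIndex_comap {G G' : Type*} [Group G] [Group G'] (f : G' →* G)
    (N : Subgroup G) (hN : N.FiniteIndex) : (N.comap f).FiniteIndex := by
  haveI := hN
  constructor
  rw [Subgroup.index_comap]
  exact Subgroup.FiniteIndex.index_ne_zero (H := N.subgroupOf f.range)

lemma aux_vn_comap {G G' : Type*} [Group G] [Group G'] (e : G ≃* G')
    (h : VirtuallyNilpotent G') : VirtuallyNilpotent G := by
  obtain ⟨N, hfi, hnil⟩ := h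
  refine ⟨N.comap e.toMonoidHom, ?_, ?_⟩
  · constructor
    have hs : Function.Surjective e.toMonoidHom := e.surjective
    rw [Subgroup.index_comap_of_surjective N hs]
    exact hfi.index_ne_zero
  · haveI := hnil
    have hmap : N.map e.symm.toMonoidHom = N.comap e.toMonoidHom := by
      ext x
      simp only [Subgroup.mem_map, Subgroup.mem_comap]
      constructor
      · rintro ⟨y, hy, rfl⟩; simpa using hy
      · intro hx; exact ⟨e x, hx, by simp⟩
    rw [← hmap]
    exact nilpotent_of_mulEquiv (e.symm.subgroupMap N)

-- the commutator computation in the wreath product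
open scoped commutatorElement in
lemma aux_comm_inl_inr {K H : Type*} [Group K] [Group H]
    (c : wreathBase K H) (u : H) :
    ⁅SemidirectProduct.inl (φ := wreathAction K H) c, (SemidirectProduct.inr u : Wreath K H)⁆
      = SemidirectProduct.inl (c * ((wreathAction K H u) c)⁻¹) := by
  rw [commutatorElement_def]
  ext <;> simp

section Forward
variable {K H : Type*} [Group K] [Group H]

open Classical in
noncomputable def wreathDelta (k : K) (h : H) : wreathBase K H :=
  ⟨fun x => if x = h then k else 1, by
    apply Set.Finite.subset (Set.finite_singleton h)
    intro x hx
    by_contra hxh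
    simp only [Set.mem_singleton_iff] at hxh
    exact hx (if_neg hxh)⟩

lemma wreathBase_infinite [Infinite H] {k : K} (hk : k ≠ 1) :
    Infinite (wreathBase K H) := by
  classical
  refine Infinite.of_injective (wreathDelta k) (fun a b hab => ?_)
  have h1 : (if a = a then k else 1) = (if a = b then k else 1) :=
    congrFun (congrArg (Subtype.val) hab) a
  rw [if_pos rfl] at h1
  by_contra hne
  rw [if_neg hne] at h1
  exact hk h1

theorem forward_dir [Infinite H] (N : Subgroup (Wreath K H)) (hfi : N.FiniteIndex)
    (hnil : Group.IsNilpotent N) {k : K} (hk : k ≠ 1) : False := by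
  haveI := hfi
  haveI hBinf : Infinite (wreathBase K H) := wreathBase_infinite hk
  -- the part of N inside the base group
  set M : Subgroup (wreathBase K H) :=
    N.comap (SemidirectProduct.inl (φ := wreathAction K H)) with hM
  have hMfi : M.FiniteIndex := aux_finiteIndex_comap _ N hfi
  -- M contains a nontrivial element
  have hbex : ∃ b : wreathBase K H, b ∈ M ∧ b ≠ 1 := by
    by_contra hb
    push_neg at hb
    have hMbot : M = ⊥ := by
      rw [Subgroup.eq_bot_iff_forall]
      exact hb
    rw [hMbot] at hMfi
    have := hMfi.index_ne_zero
    rw [Subgroup.index_bot] at this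
    exact this (Nat.card_eq_zero_of_infinite)
  obtain ⟨b, hbM, hbne⟩ := hbex
  -- the part of N inside H
  set U : Subgroup H := N.comap (SemidirectProduct.inr (φ := wreathAction K H)) with hU
  have hUfi : U.FiniteIndex := aux_finiteIndex_comap _ N hfi
  haveI := hUfi
  have hUinf : (U : Set H).Infinite := by
    rw [← Set.infinite_coe_iff]
    rw [Set.infinite_coe_iff]
    by_contra hfin
    rw [Set.not_infinite] at hfin
    haveI : Finite U := hfin
    haveI : Finite (H ⧸ U) := U.finite_quotient_of_finiteIndex
    haveI : Finite H := Finite.of_equiv _ (Subgroup.groupEquivQuotientProdSubgroup (s := U)).symm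
    exact not_finite H
  -- key induction
  have key : ∀ j : ℕ, ∃ (c : wreathBase K H) (hc : SemidirectProduct.inl c ∈ N),
      (⟨SemidirectProduct.inl c, hc⟩ : N) ∈ Subgroup.lowerCentralSeries (⊤ : Subgroup N) j ∧
        ∃ x : H, (c : H → K) x ≠ 1 := by
    intro j
    induction j with
    | zero =>
      refine ⟨b, hbM, Subgroup.mem_top _, ?_⟩
      by_contra hx
      push_neg at hx
      exact hbne (Subtype.ext (funext hx))
    | succ j ih =>
      obtain ⟨c, hc, hlcs, x₀, hx₀⟩ := ih
      have hS : (Function.mulSupport (c : H → K)).Finite := c.2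
      have hF : ((fun s : H => x₀ * s⁻¹) '' Function.mulSupport (c : H → K)).Finite :=
        hS.image _
      obtain ⟨u, huU, huF⟩ := (hUinf.diff hF).nonempty
      have huN : SemidirectProduct.inr (φ := wreathAction K H) u ∈ N := huU
      set c' : wreathBase K H := c * ((wreathAction K H u) c)⁻¹ with hc'def
      have hc' : SemidirectProduct.inl c' ∈ N := by
        rw [← aux_comm_inl_inr, commutatorElement_def]
        exact N.mul_mem (N.mul_mem (N.mul_mem hc huN) (N.inv_mem hc)) (N.inv_mem huN)
      refine ⟨c', hc', ?_, x₀, ?_⟩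
      · have heq : (⟨SemidirectProduct.inl c', hc'⟩ : N) =
            (⟨SemidirectProduct.inl c, hc⟩ : N) * ⟨SemidirectProduct.inr u, huN⟩ *
              (⟨SemidirectProduct.inl c, hc⟩ : N)⁻¹ * (⟨SemidirectProduct.inr u, huN⟩ : N)⁻¹ := by
          apply Subtype.ext
          show SemidirectProduct.inl c' = _
          rw [← aux_comm_inl_inr, commutatorElement_def]
          rfl
        rw [heq]
        exact (lowerCentralSeries_isDescendingCentralSeries (G := N)).2 _ j hlcs _
      · have hnot : (c : H → K) (u⁻¹ * x₀) = 1 := by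
          by_contra hmem
          refine huF ⟨u⁻¹ * x₀, hmem, ?_⟩
          group
        show (c : H → K) x₀ * (((wreathAction K H u) c : H → K) x₀)⁻¹ ≠ 1
        have : ((wreathAction K H u) c : H → K) x₀ = (c : H → K) (u⁻¹ * x₀) := rfl
        rw [this, hnot]
        simpa using hx₀
  obtain ⟨n, hn⟩ := nilpotent_iff_lowerCentralSeries.mp hnil
  obtain ⟨c, hc, hlcs, x, hx⟩ := key n
  rw [hn, Subgroup.mem_bot] at hlcs
  have : SemidirectProduct.inl (φ := wreathAction K H) c = 1 := congrArg Subtype.val hlcs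
  have hc1 : c = 1 := SemidirectProduct.inl_injective (by rw [this, map_one])
  rw [hc1] at hx
  exact hx rfl

end Forward

section Backward
variable {K H : Type*} [Group K] [Group H]

lemma backward_trivial (htriv : ∀ k : K, k = 1) (hH : VirtuallyNilpotent H) :
    VirtuallyNilpotent (Wreath K H) := by
  haveI : Subsingleton K := ⟨fun a b => (htriv a).trans (htriv b).symm⟩
  haveI : Subsingleton (wreathBase K H) :=
    ⟨fun a b => Subtype.ext (funext fun x => Subsingleton.elim _ _)⟩
  have hbij : Function.Bijective (SemidirectProduct.rightHom (φ := wreathAction K H)) := by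
    refine ⟨fun a b hab => ?_, SemidirectProduct.rightHom_surjective⟩
    ext
    · exact congrFun (congrArg Subtype.val (Subsingleton.elim a.left b.left)) _
    · exact hab
  exact aux_vn_comap (MulEquiv.ofBijective _ hbij) hH

lemma backward_finite [Finite H] (hK : VirtuallyNilpotent K) :
    VirtuallyNilpotent (Wreath K H) := by
  obtain ⟨NK, hNKfi, hNKnil⟩ := hK
  haveI := hNKfi
  haveI := hNKnil
  set P : Subgroup (Wreath K H) :=
    { carrier := {w | w.right = 1 ∧ ∀ x : H, (w.left : H → K) x ∈ NK}
      one_mem' := ⟨rfl, fun x => NK.one_mem⟩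
      mul_mem' := by
        rintro a b ⟨ha1, ha2⟩ ⟨hb1, hb2⟩
        refine ⟨by simp [ha1, hb1], fun x => ?_⟩
        have : (a * b).left = a.left * b.left := by
          rw [SemidirectProduct.mul_left, ha1, map_one]
          rfl
        rw [this]
        exact NK.mul_mem (ha2 x) (hb2 x)
      inv_mem' := by
        rintro a ⟨ha1, ha2⟩
        refine ⟨by simp [ha1], fun x => ?_⟩
        have : a⁻¹.left = a.left⁻¹ := by
          rw [SemidirectProduct.inv_left, ha1, inv_one, map_one]
          rfl
        rw [this]
        exact NK.inv_mem (ha2 x) } with hP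
  refine ⟨P, ?_, ?_⟩
  · -- finite index
    haveI : Finite (K ⧸ NK) := NK.finite_quotient_of_finiteIndex
    set f : Wreath K H → (H → K ⧸ NK) × H :=
      fun w => (fun x => ((w.left : H → K) x : K ⧸ NK), w.right) with hf
    have hfP : ∀ a b : Wreath K H, a⁻¹ * b ∈ P ↔ f a = f b := by
      intro a b
      have hleft : ∀ x : H, ((a⁻¹ * b).left : H → K) x =
          ((a.left : H → K) (a.right * x))⁻¹ * (b.left : H → K) (a.right * x) := by
        intro x
        show ((a.left : H → K) ((a.right⁻¹)⁻¹ * x))⁻¹ *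
          (b.left : H → K) ((a.right⁻¹)⁻¹ * x) = _
        rw [inv_inv]
      constructor
      · rintro ⟨h1, h2⟩
        have hr : a.right = b.right := by
          have : a.right⁻¹ * b.right = 1 := h1
          exact (inv_mul_eq_one.mp this)
        refine Prod.ext ?_ hr
        funext x
        have := h2 (a.right⁻¹ * x)
        rw [hleft] at this
        simp only [mul_inv_cancel_left] at this
        exact (QuotientGroup.eq (s := NK)).mpr this
      · intro hfab
        have hr : a.right = b.right := congrArg Prod.snd hfab
        refine ⟨by show a.right⁻¹ * b.right = 1; rw [hr, inv_mul_cancel], fun x => ?_⟩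
        rw [hleft x]
        have := congrFun (congrArg Prod.fst hfab) (a.right * x)
        exact (QuotientGroup.eq (s := NK)).mp this
    haveI : Finite (Wreath K H ⧸ P) := by
      have hginj : Function.Injective
          (fun q : Wreath K H ⧸ P => Quotient.liftOn' q f
            (fun a b hab => (hfP a b).mp (QuotientGroup.leftRel_apply.mp hab))) := by
        intro q1 q2
        induction q1 using Quotient.inductionOn'
        induction q2 using Quotient.inductionOn'
        intro h
        exact Quotient.sound' (QuotientGroup.leftRel_apply.mpr ((hfP _ _).mpr h))
      exact Finite.of_injective _ hginj
    exact P.finiteIndex_of_finite_quotient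
  · -- nilpotent
    have e : P ≃* (H → NK) :=
      { toFun := fun p => fun x => ⟨(p.1.left : H → K) x, p.2.2 x⟩
        invFun := fun g => ⟨⟨⟨fun x => (g x : K), Set.toFinite _⟩, 1⟩, rfl, fun x => (g x).2⟩
        left_inv := by
          rintro ⟨w, hw1, hw2⟩
          apply Subtype.ext
          apply SemidirectProduct.ext
          · rfl
          · exact hw1.symm
        right_inv := by
          intro g
          funext x
          rfl
        map_mul' := by
          rintro ⟨a, ha1, ha2⟩ ⟨b, hb1, hb2⟩
          funext x
          apply Subtype.ext
          show ((a * b).left : H → K) x = (a.left : H → K) x * (b.left : H → K) x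
          rw [SemidirectProduct.mul_left, ha1, map_one]
          rfl }
    haveI : Group.IsNilpotent (H → NK) := by infer_instance
    exact nilpotent_of_mulEquiv e.symm

end Backward

/-- For finitely generated virtually nilpotent groups `K` and `H`, the restricted
wreath product `K ≀ H` is virtually nilpotent if and only if `H` is finite or `K`
is trivial. -/
theorem wreath_virtuallyNilpotent_iff (K H : Type*) [Group K] [Group H]
    [Group.FG K] [Group.FG H]
    (hK : VirtuallyNilpotent K) (hH : VirtuallyNilpotent H) :
    VirtuallyNilpotent (Wreath K H) ↔ (Finite H ∨ ∀ k : K, k = 1) := by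
  constructor
  · rintro ⟨N, hfi, hnil⟩
    by_contra hcon
    push_neg at hcon
    obtain ⟨hHfin, k, hk⟩ := hcon
    haveI : Infinite H := hHfin
    exact forward_dir N hfi hnil hk
  · rintro (hfin | htriv)
    · exact backward_finite hK
    · exact backward_trivial htriv hH
end

section
/- Let H be an infinite group with identity element e. Then for every natural number n there exists a finite subset F of H with |F| ≥ n such that hF ≠ F for every h ∈ H with h ≠ e. -/
/-- In any infinite group `H`, for every natural number `n` there is a finite
subset `F` of `H` with at least `n` elements such that `h F ≠ F` for every
`h ≠ 1` in `H`. -/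
theorem exists_finset_card_ge_no_invariant_translate
    (H : Type*) [Group H] [Infinite H] (n : ℕ) :
    ∃ F : Finset H, n ≤ F.card ∧
      ∀ h : H, h ≠ 1 → (fun f => h * f) '' (F : Set H) ≠ (F : Set H) := by
  classical
  obtain ⟨p, hpge, hp⟩ := Nat.exists_infinite_primes (max n 3)
  have hp3 : 3 ≤ p := le_trans (le_max_right _ _) hpge
  have hppos : 0 < p := by omega
  obtain ⟨x, hx1⟩ := exists_ne (1 : H)
  obtain ⟨y, hy⟩ := Infinite.exists_notMem_finset ((Finset.range p).image (x ^ ·))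
  have hy1 : y ≠ 1 := by
    intro h; subst h
    exact hy (Finset.mem_image.2 ⟨0, Finset.mem_range.2 (by omega), pow_zero x⟩)
  have hyx : y ≠ x := fun h =>
    hy (Finset.mem_image.2 ⟨1, Finset.mem_range.2 (by omega), by rw [pow_one]; exact h.symm⟩)
  have hcard3 : ({1, x, y} : Finset H).card ≤ 3 := by
    apply le_trans (Finset.card_insert_le _ _)
    have := Finset.card_insert_le x ({y} : Finset H)
    simp at this ⊢
    omega
  obtain ⟨F, hsub, hcard⟩ :=
    Infinite.exists_superset_card_eq ({1, x, y} : Finset H) p (by omega)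
  have h1F : (1 : H) ∈ F := hsub (by simp)
  have hxF : x ∈ F := hsub (by simp)
  have hyF : y ∈ F := hsub (by simp)
  refine ⟨F, by rw [hcard]; exact le_trans (le_max_left _ _) hpge, ?_⟩
  intro h hne heq
  -- forward and backward invariance
  have hfwd : ∀ a ∈ F, h * a ∈ F := by
    intro a ha
    have : h * a ∈ (fun f => h * f) '' (F : Set H) := ⟨a, ha, rfl⟩
    rw [heq] at this; exact this
  have hbwd : ∀ a ∈ F, h⁻¹ * a ∈ F := by
    intro a ha
    have : a ∈ (fun f => h * f) '' (F : Set H) := by rw [heq]; exact ha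
    obtain ⟨b, hb, rfl⟩ := this
    simpa using hb
  -- invariance under all integer powers
  have hstab : ∀ k : ℤ, ∀ a ∈ F, h ^ k * a ∈ F := by
    intro k
    induction k using Int.induction_on with
    | zero => simp only [zpow_zero, one_mul]; exact fun a ha => ha
    | succ k ih =>
      intro a ha
      have : h ^ ((k : ℤ) + 1) * a = h * (h ^ (k : ℤ) * a) := by group
      rw [this]; exact hfwd _ (ih a ha)
    | pred k ih =>
      intro a ha
      have : h ^ (-(k : ℤ) - 1) * a = h⁻¹ * (h ^ (-(k : ℤ)) * a) := by group
      rw [this]; exact hbwd _ (ih a ha)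
  have hpowmem : ∀ k : ℤ, h ^ k ∈ F := fun k => by simpa using hstab k 1 h1F
  have hpowmemN : ∀ k : ℕ, h ^ k ∈ F := fun k => by
    have := hpowmem (k : ℤ); rwa [zpow_natCast] at this
  -- h has finite order
  have hfin : IsOfFinOrder h := by
    obtain ⟨k, l, hkl, hpow⟩ :=
      Finite.exists_ne_map_eq_of_infinite (fun k : ℕ => (⟨h ^ k, hpowmemN k⟩ : {a // a ∈ F}))
    have hpow' : h ^ k = h ^ l := by simpa using hpow
    rcases Nat.lt_or_ge k l with hlt | hge
    · refine isOfFinOrder_iff_pow_eq_one.2 ⟨l - k, by omega, ?_⟩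
      rw [pow_sub _ (le_of_lt hlt), hpow', mul_inv_cancel]
    · have hlt : l < k := by omega
      refine isOfFinOrder_iff_pow_eq_one.2 ⟨k - l, by omega, ?_⟩
      rw [pow_sub _ (le_of_lt hlt), ← hpow', mul_inv_cancel]
  set m := orderOf h with hm
  have hmpos : 0 < m := hfin.orderOf_pos
  have hm1 : m ≠ 1 := fun hh => hne (orderOf_eq_one_iff.1 hh)
  -- counting: m divides p
  set K : Subgroup H := Subgroup.zpowers h with hK
  set φ : H → H ⧸ K := fun g => QuotientGroup.mk g⁻¹ with hφ
  have hcount : F.card = ∑ q ∈ F.image φ, (F.filter fun a => φ a = q).card :=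
    Finset.card_eq_sum_card_fiberwise (fun a ha => Finset.mem_image_of_mem φ ha)
  have hfiber : ∀ q ∈ F.image φ, (F.filter fun a => φ a = q).card = m := by
    intro q hq
    obtain ⟨f₀, hf₀, rfl⟩ := Finset.mem_image.1 hq
    have hset : (F.filter fun a => φ a = φ f₀)
        = (Finset.range m).image fun i => h ^ i * f₀ := by
      ext a
      simp only [Finset.mem_filter, Finset.mem_image, Finset.mem_range]
      constructor
      · rintro ⟨haF, haq⟩
        have hmem : a * f₀⁻¹ ∈ K := by
          have := QuotientGroup.eq.1 haq
          simpa using this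
        obtain ⟨k, hk⟩ := Subgroup.mem_zpowers_iff.1 hmem
        refine ⟨(k % (m : ℤ)).toNat, ?_, ?_⟩
        · have h0 : 0 ≤ k % (m : ℤ) := Int.emod_nonneg _ (by exact_mod_cast hmpos.ne')
          have h1 : k % (m : ℤ) < m := Int.emod_lt_of_pos _ (by exact_mod_cast hmpos)
          omega
        · have h0 : 0 ≤ k % (m : ℤ) := Int.emod_nonneg _ (by exact_mod_cast hmpos.ne')
          have : h ^ (((k % (m : ℤ)).toNat : ℤ)) = h ^ k := by
            rw [Int.toNat_of_nonneg h0, zpow_mod_orderOf]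
          rw [← zpow_natCast, this, hk]
          group
      · rintro ⟨i, hi, rfl⟩
        have hmemF : h ^ (i : ℤ) * f₀ ∈ F := hstab i f₀ hf₀
        rw [zpow_natCast] at hmemF
        refine ⟨hmemF, ?_⟩
        show QuotientGroup.mk (h ^ i * f₀)⁻¹ = QuotientGroup.mk f₀⁻¹
        rw [QuotientGroup.eq]
        refine Subgroup.mem_zpowers_iff.2 ⟨i, ?_⟩
        rw [zpow_natCast]
        group
    rw [hset, Finset.card_image_of_injOn, Finset.card_range]
    intro i hi j hj hij
    simp only [Finset.coe_range, Set.mem_Iio] at hi hj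
    have : h ^ i = h ^ j := mul_right_cancel hij
    exact pow_injOn_Iio_orderOf hi hj this
  have hdvd : m ∣ p := by
    have : F.card = (F.image φ).card * m := by
      rw [hcount, Finset.sum_congr rfl hfiber, Finset.sum_const, smul_eq_mul]
    rw [hcard] at this
    exact Dvd.intro_left _ this.symm
  have hmp : m = p := by
    rcases (Nat.Prime.eq_one_or_self_of_dvd hp m hdvd) with h1 | h2
    · exact absurd h1 hm1
    · exact h2
  -- F is exactly the powers of h
  set T : Finset H := (Finset.range p).image (h ^ ·) with hT
  have hTsub : T ⊆ F := by
    intro a ha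
    obtain ⟨i, _, rfl⟩ := Finset.mem_image.1 ha
    exact hpowmemN i
  have hTcard : T.card = p := by
    rw [hT, Finset.card_image_of_injOn, Finset.card_range]
    intro i hi j hj hij
    simp only [Finset.coe_range, Set.mem_Iio] at hi hj
    rw [← hmp] at hi hj
    exact pow_injOn_Iio_orderOf hi hj hij
  have hFT : T = F := Finset.eq_of_subset_of_card_le hTsub (by rw [hcard, hTcard])
  -- x is a power of h, so h is a power of x (Bezout)
  obtain ⟨i, hi, hxi⟩ := Finset.mem_image.1 (hFT ▸ hxF)
  rw [Finset.mem_range] at hi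
  have hi0 : i ≠ 0 := by
    intro hh; subst hh; simp at hxi; exact hx1 hxi.symm
  have hgcd : Nat.gcd p i = 1 := by
    rcases Nat.Prime.eq_one_or_self_of_dvd hp _ (Nat.gcd_dvd_left p i) with h1 | h2
    · exact h1
    · exfalso
      have : p ∣ i := h2 ▸ Nat.gcd_dvd_right p i
      have := Nat.le_of_dvd (by omega) this
      omega
  have hbezout := Nat.gcd_eq_gcd_ab p i
  set A := Nat.gcdA p i with hA
  set B := Nat.gcdB p i with hB
  have hbez : (1 : ℤ) = p * A + i * B := by rw [← hbezout, hgcd]; norm_num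
  have hhp : h ^ (p : ℤ) = 1 := by
    rw [zpow_natCast, ← hmp, pow_orderOf_eq_one]
  have hhx : x ^ B = h := by
    have : x ^ B = h ^ ((i : ℤ) * B) := by
      rw [← hxi, ← zpow_natCast h i, ← zpow_mul]
    rw [this]
    have : (i : ℤ) * B = 1 - p * A := by omega
    rw [this, zpow_sub, zpow_one, zpow_mul, hhp, one_zpow, inv_one, mul_one]
  -- y is then a power of x, contradiction
  obtain ⟨j, hj, hyj⟩ := Finset.mem_image.1 (hFT ▸ hyF)
  have hyzp : y ∈ Subgroup.zpowers x := by
    refine Subgroup.mem_zpowers_iff.2 ⟨B * j, ?_⟩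
    rw [zpow_mul, hhx, ← hyj, zpow_natCast]
  have hxfin : IsOfFinOrder x := by
    refine isOfFinOrder_iff_pow_eq_one.2 ⟨p, hppos, ?_⟩
    rw [← hxi, ← pow_mul, mul_comm, pow_mul]
    have : h ^ p = 1 := by rw [← hmp, pow_orderOf_eq_one]
    rw [this, one_pow]
  have hxord : orderOf x ≤ p := by
    refine Nat.le_of_dvd hppos (orderOf_dvd_of_pow_eq_one ?_)
    rw [← hxi, ← pow_mul, mul_comm, pow_mul]
    have : h ^ p = 1 := by rw [← hmp, pow_orderOf_eq_one]
    rw [this, one_pow]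
  have := hxfin.mem_zpowers_iff_mem_range_orderOf.1 hyzp
  obtain ⟨k, hk, hyk⟩ := Finset.mem_image.1 this
  rw [Finset.mem_range] at hk
  exact hy (Finset.mem_image.2 ⟨k, Finset.mem_range.2 (by omega), hyk⟩)
end

section
/- Let H be an infinite group and let K be a group containing a subgroup S that is a simple nonabelian group. Then the restricted wreath product K ≀ H is not virtually solvable: no subgroup of finite index in K ≀ H is solvable. -/
section WreathAux

open SemidirectProduct Function

variable {K H : Type*} [Group K] [Group H] [DecidableEq H]

/-- The element of the base group supported at one point. -/
def wSing (h : H) (k : K) : wreathBase K H :=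
  ⟨Pi.mulSingle h k, (Set.finite_singleton h).subset Pi.mulSupport_mulSingle_subset⟩

lemma wSing_coe (h : H) (k : K) (x : H) :
    ((wSing h k : wreathBase K H) : H → K) x = if x = h then k else 1 :=
  Pi.mulSingle_apply h k x

lemma wSing_mul (h : H) (x y : K) : wSing h (x * y) = wSing h x * wSing h y :=
  Subtype.ext (funext fun z => by
    show (Pi.mulSingle h (x * y) : H → K) z = (Pi.mulSingle h x : H → K) z * (Pi.mulSingle h y : H → K) z
    by_cases hz : z = h
    · subst hz; simp
    · simp [Pi.mulSingle_eq_of_ne hz])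

/-- `wSing h` as a monoid hom. -/
def wSingHom (h : H) : K →* wreathBase K H where
  toFun := wSing h
  map_one' := Subtype.ext (funext fun x => by simp [wSing])
  map_mul' := wSing_mul h

lemma shift_wSing (t h : H) (k : K) :
    (wreathAction K H t) (wSing h k) = wSing (t * h) k := by
  apply Subtype.ext
  funext x
  show (Pi.mulSingle h k : H → K) (t⁻¹ * x) = (Pi.mulSingle (t * h) k : H → K) x
  by_cases hx : x = t * h
  · subst hx
    rw [inv_mul_cancel_left, Pi.mulSingle_eq_same, Pi.mulSingle_eq_same]
  · rw [Pi.mulSingle_eq_of_ne hx, Pi.mulSingle_eq_of_ne]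
    intro hcon
    exact hx (by rw [← hcon, mul_inv_cancel_left])

open scoped commutatorElement in
/-- A simple nonabelian group is not solvable. -/
lemma not_solvable_of_simple_nonab {G : Type*} [Group G] [hs : IsSimpleGroup G]
    (hnab : ∃ a b : G, a * b ≠ b * a) : ¬ IsSolvable G := by
  intro hsolv
  obtain ⟨a, b, hab⟩ := hnab
  have hcomm : (⁅(⊤ : Subgroup G), (⊤ : Subgroup G)⁆ : Subgroup G) = ⊤ := by
    rcases IsSimpleGroup.eq_bot_or_eq_top_of_normal ⁅(⊤ : Subgroup G), (⊤ : Subgroup G)⁆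
        (Subgroup.commutator_normal ⊤ ⊤) with h | h
    · exfalso
      have hmem : ⁅a, b⁆ ∈ (⁅(⊤ : Subgroup G), (⊤ : Subgroup G)⁆ : Subgroup G) :=
        Subgroup.commutator_mem_commutator (Subgroup.mem_top a) (Subgroup.mem_top b)
      rw [h, Subgroup.mem_bot, commutatorElement_eq_one_iff_mul_comm] at hmem
      exact hab hmem
    · exact h
  have htop : ∀ n, derivedSeries G n = ⊤ := by
    intro n
    induction n with
    | zero => rfl
    | succ n ih => rw [derivedSeries_succ, ih, hcomm]
  obtain ⟨n, hn⟩ := hsolv.solvable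
  rw [htop n] at hn
  obtain ⟨x, hx⟩ := exists_ne (1 : G)
  have hmem2 : x ∈ (⊥ : Subgroup G) := by rw [← hn]; exact Subgroup.mem_top x
  exact hx (Subgroup.mem_bot.mp hmem2)

end WreathAux

/-- If `H` is an infinite group and `K` contains a nonabelian simple subgroup,
then the restricted wreath product `K ≀ H` is not virtually solvable: it has no
solvable subgroup of finite index. -/
theorem wreath_not_virtuallySolvable (K H : Type*) [Group K] [Group H] [Infinite H]
    (S : Subgroup K) (hsimple : IsSimpleGroup S) (hnonab : ¬ ∀ a b : S, a * b = b * a) :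
    ¬ ∃ M : Subgroup (Wreath K H), M.FiniteIndex ∧ IsSolvable M := by
  classical
  rintro ⟨M, hfin, hsolv⟩
  push_neg at hnonab
  obtain ⟨a, b, hab⟩ := hnonab
  have ha1 : a ≠ 1 := by rintro rfl; simp at hab
  let N : Subgroup (Wreath K H) := M.normalCore
  have hNnorm : N.Normal := M.normalCore_normal
  haveI := hfin
  have hNfin : N.FiniteIndex := Subgroup.finiteIndex_normalCore M
  have hNsolv : IsSolvable N :=
    by haveI : Group.IsSolvable M := hsolv; exact solvable_of_solvable_injective (Subgroup.inclusion_injective M.normalCore_le)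
  -- the embedding of S at position 1
  let j : ↥S →* Wreath K H :=
    SemidirectProduct.inl.comp ((wSingHom (1 : H)).comp S.subtype)
  have hj : ∀ s : ↥S, j s = SemidirectProduct.inl (wSing (1 : H) (s : K)) := fun _ => rfl
  have hjinj : Function.Injective j := by
    intro s t hst
    have h1 := congrArg (fun g : Wreath K H => g.left.1 (1 : H)) hst
    simp only [hj, SemidirectProduct.left_inl] at h1
    have h2 : (s : K) = (t : K) := by
      simpa [wSing, Pi.mulSingle_eq_same] using h1
    exact Subtype.ext h2
  -- The comap of N under j is trivial
  have hT : N.comap j = ⊥ := by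
    have hTnorm : (N.comap j).Normal := hNnorm.comap j
    rcases IsSimpleGroup.eq_bot_or_eq_top_of_normal (N.comap j) hTnorm with h | h
    · exact h
    · exfalso
      have hmem : ∀ s : ↥S, j s ∈ N := by
        intro s
        have : s ∈ N.comap j := by rw [h]; trivial
        exact this
      have hinj2 : Function.Injective (j.codRestrict N hmem) := fun x y hxy =>
        hjinj (congrArg Subtype.val hxy)
      have : IsSolvable ↥S := by haveI : Group.IsSolvable N := hNsolv; exact solvable_of_solvable_injective hinj2
      exact not_solvable_of_simple_nonab ⟨a, b, hab⟩ this
  have hTmem : ∀ s : ↥S, j s ∈ N → s = 1 := by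
    intro s hs
    have : s ∈ N.comap j := hs
    rwa [hT, Subgroup.mem_bot] at this
  -- the key claim: the value at 1 of an S-valued element of N is trivial
  have claim : ∀ g : wreathBase K H, (∀ x, g.1 x ∈ S) →
      SemidirectProduct.inl g ∈ N → g.1 1 = 1 := by
    intro g hgS hgN
    set s : ↥S := ⟨g.1 1, hgS 1⟩ with hs_def
    have hcent : ∀ t : ↥S, t * s = s * t := by
      intro t
      have h1 : SemidirectProduct.inl (wSing (1 : H) (t : K)) * SemidirectProduct.inl g *
          (SemidirectProduct.inl (wSing (1 : H) (t : K)))⁻¹ *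
          (SemidirectProduct.inl g)⁻¹ ∈ N :=
        N.mul_mem (hNnorm.conj_mem _ hgN _) (N.inv_mem hgN)
      have h2 : SemidirectProduct.inl (wSing (1 : H) (t : K)) * SemidirectProduct.inl g *
          (SemidirectProduct.inl (wSing (1 : H) (t : K)))⁻¹ *
          (SemidirectProduct.inl g)⁻¹ = j (t * s * t⁻¹ * s⁻¹) := by
        rw [hj, ← map_inv, ← map_inv, ← map_mul, ← map_mul, ← map_mul]
        congr 1
        apply Subtype.ext
        funext x
        show (wSing (1 : H) (t : K) : H → K) x * g.1 x *
            ((wSing (1 : H) (t : K) : H → K) x)⁻¹ * (g.1 x)⁻¹ =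
            (wSing (1 : H) ((↑(t * s * t⁻¹ * s⁻¹) : K)) : H → K) x
        by_cases hx : x = 1
        · subst hx
          simp [wSing_coe, hs_def, mul_assoc]
        · simp [wSing_coe, hx]
      have h3 := hTmem _ (h2 ▸ h1)
      have h4 : t * s * t⁻¹ * s⁻¹ = 1 := h3
      calc t * s = (t * s * t⁻¹ * s⁻¹) * (s * t) := by group
        _ = s * t := by rw [h4, one_mul]
    have hsc : s ∈ Subgroup.center ↥S := Subgroup.mem_center_iff.mpr hcent
    rcases IsSimpleGroup.eq_bot_or_eq_top_of_normal (Subgroup.center ↥S)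
        (by infer_instance) with h | h
    · rw [h, Subgroup.mem_bot] at hsc
      exact congrArg Subtype.val hsc
    · exfalso
      have : a ∈ Subgroup.center ↥S := by rw [h]; trivial
      exact hab ((Subgroup.mem_center_iff.mp this b).symm)
  -- upgrade: any S-valued element of N is trivial
  have key : ∀ f : wreathBase K H, (∀ x, f.1 x ∈ S) →
      SemidirectProduct.inl f ∈ N → f = 1 := by
    intro f hfS hfN
    apply Subtype.ext
    funext y
    show f.1 y = 1
    have hconj : SemidirectProduct.inl ((wreathAction K H y⁻¹) f) ∈ N := by
      rw [SemidirectProduct.inl_aut]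
      have := hNnorm.conj_mem _ hfN (SemidirectProduct.inr (y⁻¹ : H))
      simpa [map_inv] using this
    have hSval : ∀ x, ((wreathAction K H y⁻¹) f).1 x ∈ S := fun x => hfS _
    have := claim _ hSval hconj
    show f.1 y = 1
    calc f.1 y = f.1 ((y⁻¹)⁻¹ * 1) := by rw [inv_inv, mul_one]
      _ = ((wreathAction K H y⁻¹) f).1 1 := rfl
      _ = 1 := this
  -- finale: finite index forces two positions to coincide
  haveI := hNfin
  have hfinq : Finite (Wreath K H ⧸ N) := Subgroup.finite_quotient_of_finiteIndex
  obtain ⟨h₁, h₂, hne, heq⟩ := Finite.exists_ne_map_eq_of_infinite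
    (fun h : H => ((SemidirectProduct.inl (wSing h (a : K)) : Wreath K H) : Wreath K H ⧸ N))
  have hmemN : (SemidirectProduct.inl (wSing h₁ (a : K)) : Wreath K H)⁻¹ *
      SemidirectProduct.inl (wSing h₂ (a : K)) ∈ N := (QuotientGroup.eq).mp heq
  rw [← map_inv, ← map_mul] at hmemN
  have hSval : ∀ x, (((wSing h₁ (a : K))⁻¹ * wSing h₂ (a : K)) : wreathBase K H).1 x ∈ S := by
    intro x
    show ((wSing h₁ (a : K) : H → K) x)⁻¹ * (wSing h₂ (a : K) : H → K) x ∈ S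
    rw [wSing_coe, wSing_coe]
    refine S.mul_mem (S.inv_mem ?_) ?_ <;> split <;> simp [S.one_mem, a.2]
  have hzero := key _ hSval hmemN
  have hval := congrArg (fun f : wreathBase K H => f.1 h₂) hzero
  have : ((wSing h₁ (a : K) : H → K) h₂)⁻¹ * (wSing h₂ (a : K) : H → K) h₂ = 1 := hval
  rw [wSing_coe, wSing_coe, if_neg (Ne.symm hne), if_pos rfl, inv_one, one_mul] at this
  exact ha1 (Subtype.ext this)
end

section
/- The group presented by two generators a, b subject to the relations [a, bᵏ a b⁻ᵏ] = 1 for all k ∈ ℤ is isomorphic to the restricted wreath product ℤ ≀ ℤ, that is, to the semidirect product (⊕_{k∈ℤ} ℤ) ⋊ ℤ, where ℤ acts on the group of finitely supported functions ℤ → ℤ (under pointwise addition) by shifting the index. -/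
open scoped commutatorElement in
/-- The relators `[a, bᵏ a b⁻ᵏ]` for `k ∈ ℤ`, in the free group on the two
generators `a = FreeGroup.of 0` and `b = FreeGroup.of 1`, where
`[x, y] = x y x⁻¹ y⁻¹` is the commutator. -/
def lamplighterRels : Set (FreeGroup (Fin 2)) :=
  { r | ∃ k : ℤ, r = ⁅FreeGroup.of (0 : Fin 2),
      (FreeGroup.of (1 : Fin 2)) ^ k * FreeGroup.of (0 : Fin 2) *
        (FreeGroup.of (1 : Fin 2)) ^ (-k)⁆ }

/-- The shift action of `ℤ` on the group `⊕_{k∈ℤ} ℤ` of finitely supported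
functions `ℤ → ℤ` under pointwise addition: `(m • f) x = f (x - m)`. -/
noncomputable def lamplighterShift : Multiplicative ℤ →* MulAut (Multiplicative (ℤ →₀ ℤ)) where
  toFun m := AddEquiv.toMultiplicative (Finsupp.domCongr (M := ℤ)
    (Equiv.addLeft (Multiplicative.toAdd m)))
  map_one' := by
    ext f : 1
    show AddEquiv.toMultiplicative (Finsupp.domCongr (M := ℤ)
        (Equiv.addLeft (Multiplicative.toAdd (1 : Multiplicative ℤ)))) f
      = (1 : MulAut (Multiplicative (ℤ →₀ ℤ))) f
    rw [show Multiplicative.toAdd (1 : Multiplicative ℤ) = 0 from rfl, Equiv.addLeft_zero,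
      show (1 : Equiv.Perm ℤ) = Equiv.refl ℤ from rfl, Finsupp.domCongr_refl]
    rfl
  map_mul' a b := by
    ext f : 1
    show AddEquiv.toMultiplicative (Finsupp.domCongr (M := ℤ)
        (Equiv.addLeft (Multiplicative.toAdd (a * b)))) f
      = AddEquiv.toMultiplicative (Finsupp.domCongr (M := ℤ)
          (Equiv.addLeft (Multiplicative.toAdd a)))
        (AddEquiv.toMultiplicative (Finsupp.domCongr (M := ℤ)
          (Equiv.addLeft (Multiplicative.toAdd b))) f)
    rw [show Multiplicative.toAdd (a * b)
          = Multiplicative.toAdd a + Multiplicative.toAdd b from rfl,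
      Equiv.addLeft_add,
      show Equiv.addLeft (Multiplicative.toAdd a) * Equiv.addLeft (Multiplicative.toAdd b)
          = (Equiv.addLeft (Multiplicative.toAdd b)).trans
              (Equiv.addLeft (Multiplicative.toAdd a)) from rfl,
      ← Finsupp.domCongr_trans]
    rfl

namespace Lamp

abbrev G := PresentedGroup lamplighterRels
abbrev W := (Multiplicative (ℤ →₀ ℤ)) ⋊[lamplighterShift] Multiplicative ℤ

lemma shift_apply (m : ℤ) (f : ℤ →₀ ℤ) :
    lamplighterShift (Multiplicative.ofAdd m) (Multiplicative.ofAdd f)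
      = Multiplicative.ofAdd (Finsupp.equivMapDomain (Equiv.addLeft m) f) := rfl

lemma shift_single (m k n : ℤ) :
    lamplighterShift (Multiplicative.ofAdd m) (Multiplicative.ofAdd (Finsupp.single k n))
      = Multiplicative.ofAdd (Finsupp.single (m + k) n) := by
  rw [shift_apply, Finsupp.equivMapDomain_single]; rfl

def aG : G := PresentedGroup.of 0
def bG : G := PresentedGroup.of 1
def A (k : ℤ) : G := bG ^ k * aG * bG ^ (-k)

open scoped commutatorElement in
lemma comm_aA (k : ℤ) : Commute aG (A k) := by
  rw [← commutatorElement_eq_one_iff_commute]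
  have : (QuotientGroup.mk (⁅FreeGroup.of (0 : Fin 2),
      (FreeGroup.of (1 : Fin 2)) ^ k * FreeGroup.of (0 : Fin 2) *
        (FreeGroup.of (1 : Fin 2)) ^ (-k)⁆ : FreeGroup (Fin 2)) : G) = 1 := by
    exact (QuotientGroup.eq_one_iff _).2
      (Subgroup.subset_normalClosure (show _ ∈ lamplighterRels from ⟨k, rfl⟩))
  simp [A, aG, bG, PresentedGroup.of, commutatorElement_def] at this ⊢
  exact this

lemma b_conj_A (m k : ℤ) : bG ^ m * A k * bG ^ (-m) = A (m + k) := by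
  simp only [A, ← zpow_add]
  group

lemma comm_A (j k : ℤ) : Commute (A j) (A k) := by
  have h := (comm_aA (k - j)).map (MulAut.conj (bG ^ j)).toMonoidHom
  simp only [MulEquiv.coe_toMonoidHom, MulAut.conj_apply] at h
  have e1 : bG ^ j * aG * (bG ^ j)⁻¹ = A j := by simp [A, zpow_neg]
  have e2 : bG ^ j * A (k - j) * (bG ^ j)⁻¹ = A k := by
    have := b_conj_A j (k - j)
    simpa [zpow_neg, add_sub_cancel] using this
  rwa [e1, e2] at h

def Sc : Subgroup G := Subgroup.closure (Set.range A)

noncomputable instance : CommGroup Sc :=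
  Subgroup.closureCommGroupOfComm (k := Set.range A) (by
    rintro x ⟨j, rfl⟩ y ⟨k, rfl⟩
    exact comm_A j k)

def A' (k : ℤ) : Sc := ⟨A k, Subgroup.subset_closure ⟨k, rfl⟩⟩

noncomputable def h0 : (ℤ →₀ ℤ) →+ Additive Sc :=
  Finsupp.liftAddHom fun k => zmultiplesHom (Additive Sc) (Additive.ofMul (A' k))

noncomputable def ψ₁ : Multiplicative (ℤ →₀ ℤ) →* G :=
  MonoidHom.mk' (fun f => ((Additive.toMul (h0 (Multiplicative.toAdd f)) : Sc) : G))
    (by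
      intro x y
      have : h0 (Multiplicative.toAdd x + Multiplicative.toAdd y)
          = h0 (Multiplicative.toAdd x) + h0 (Multiplicative.toAdd y) := map_add _ _ _
      simp only [show Multiplicative.toAdd (x * y)
        = Multiplicative.toAdd x + Multiplicative.toAdd y from rfl, this]
      rfl)

lemma ψ₁_single (k n : ℤ) :
    ψ₁ (Multiplicative.ofAdd (Finsupp.single k n)) = (A k) ^ n := by
  show ((Additive.toMul (h0 (Finsupp.single k n)) : Sc) : G) = _
  rw [h0]; erw [Finsupp.liftAddHom_apply_single]
  show ((Additive.toMul (n • Additive.ofMul (A' k)) : Sc) : G) = _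
  rw [toMul_zsmul]
  push_cast
  rfl

noncomputable def ψ₂ : Multiplicative ℤ →* G := zpowersHom G bG

lemma ψ₂_apply (m : ℤ) : ψ₂ (Multiplicative.ofAdd m) = bG ^ m := rfl

lemma monoidHom_ext_mult {M : Type*} [Monoid M]
    (F F' : Multiplicative (ℤ →₀ ℤ) →* M)
    (h : ∀ k n, F (Multiplicative.ofAdd (Finsupp.single k n))
      = F' (Multiplicative.ofAdd (Finsupp.single k n))) : F = F' := by
  apply MonoidHom.ext; intro f
  have key : ∀ g : ℤ →₀ ℤ, F (Multiplicative.ofAdd g) = F' (Multiplicative.ofAdd g) := by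
    intro g
    induction g using Finsupp.induction with
    | zero =>
      show F 1 = F' 1
      rw [map_one, map_one]
    | single_add k n g _ _ ih =>
      rw [show Multiplicative.ofAdd (Finsupp.single k n + g)
          = Multiplicative.ofAdd (Finsupp.single k n) * Multiplicative.ofAdd g from rfl,
        map_mul, map_mul, h, ih]
  exact key (Multiplicative.toAdd f)

end Lamp

namespace Lamp2
open Lamp SemidirectProduct

lemma compat : ∀ g : Multiplicative ℤ,
    Lamp.ψ₁.comp (lamplighterShift g).toMonoidHom
      = (MulAut.conj (Lamp.ψ₂ g)).toMonoidHom.comp Lamp.ψ₁ := by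
  intro g
  apply monoidHom_ext_mult
  intro k n
  simp only [MonoidHom.comp_apply, MulEquiv.coe_toMonoidHom, MulAut.conj_apply]
  rw [show g = Multiplicative.ofAdd (Multiplicative.toAdd g) from rfl,
    shift_single, ψ₁_single, ψ₁_single, ψ₂_apply]
  set m := Multiplicative.toAdd g
  rw [← b_conj_A m k]
  rw [show bG ^ m * A k * bG ^ (-m) = bG ^ m * A k * (bG ^ m)⁻¹ by rw [zpow_neg]]
  rw [conj_zpow]

noncomputable def ψ : W →* G := SemidirectProduct.lift ψ₁ ψ₂ compat

noncomputable def fgen : Fin 2 → W :=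
  ![inl (Multiplicative.ofAdd (Finsupp.single (0:ℤ) (1:ℤ))),
    inr (Multiplicative.ofAdd (1:ℤ))]

lemma BW_zpow (k : ℤ) : (inr (Multiplicative.ofAdd (1:ℤ)) : W) ^ k
    = inr (Multiplicative.ofAdd k) := by
  rw [← map_zpow, ← ofAdd_zsmul]
  norm_num

lemma W_conj (k : ℤ) :
    (inr (Multiplicative.ofAdd (1:ℤ)) : W) ^ k
      * inl (Multiplicative.ofAdd (Finsupp.single (0:ℤ) (1:ℤ)))
      * (inr (Multiplicative.ofAdd (1:ℤ)) : W) ^ (-k)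
    = inl (Multiplicative.ofAdd (Finsupp.single k (1:ℤ))) := by
  rw [BW_zpow, BW_zpow, show (Multiplicative.ofAdd (-k))
      = ((Multiplicative.ofAdd k : Multiplicative ℤ))⁻¹ from rfl,
    ← SemidirectProduct.inl_aut, shift_single]
  rw [add_zero]

open scoped commutatorElement in
lemma hrel : ∀ r ∈ lamplighterRels, FreeGroup.lift fgen r = 1 := by
  rintro r ⟨k, rfl⟩
  rw [map_commutatorElement]
  simp only [map_mul, map_zpow, FreeGroup.lift_apply_of]
  show ⁅fgen 0, fgen 1 ^ k * fgen 0 * fgen 1 ^ (-k)⁆ = 1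
  rw [show fgen 0 = inl (Multiplicative.ofAdd (Finsupp.single (0:ℤ) (1:ℤ))) from rfl,
    show fgen 1 = inr (Multiplicative.ofAdd (1:ℤ)) from rfl, W_conj]
  exact commutatorElement_eq_one_iff_commute.mpr ((Commute.all _ _).map inl)

noncomputable def φ : G →* W := PresentedGroup.toGroup hrel

lemma φ_a : φ aG = inl (Multiplicative.ofAdd (Finsupp.single (0:ℤ) (1:ℤ))) :=
  PresentedGroup.toGroup.of hrel

lemma φ_b : φ bG = inr (Multiplicative.ofAdd (1:ℤ)) :=
  PresentedGroup.toGroup.of hrel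

lemma φ_A (k : ℤ) : φ (A k) = inl (Multiplicative.ofAdd (Finsupp.single k (1:ℤ))) := by
  rw [A, map_mul, map_mul, map_zpow, map_zpow, φ_a, φ_b, W_conj]

lemma φψ : φ.comp ψ = MonoidHom.id W := by
  apply SemidirectProduct.hom_ext
  · apply monoidHom_ext_mult
    intro k n
    simp only [MonoidHom.comp_apply, MonoidHom.id_apply, ψ, SemidirectProduct.lift_inl,
      ψ₁_single, map_zpow, φ_A]
    rw [← map_zpow, ← ofAdd_zsmul, Finsupp.smul_single, smul_eq_mul, mul_one]
  · apply MonoidHom.ext_mint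
    show φ (ψ (inr (Multiplicative.ofAdd (1:ℤ)))) = inr (Multiplicative.ofAdd (1:ℤ))
    rw [ψ, SemidirectProduct.lift_inr, ψ₂_apply, zpow_one, φ_b]

lemma ψφ : ψ.comp φ = MonoidHom.id G := by
  apply PresentedGroup.ext
  intro x
  fin_cases x
  · show ψ (φ aG) = aG
    rw [φ_a, ψ, SemidirectProduct.lift_inl,
      show Multiplicative.ofAdd (Finsupp.single (0:ℤ) (1:ℤ))
        = Multiplicative.ofAdd (Finsupp.single (0:ℤ) (1:ℤ)) from rfl, ψ₁_single]
    simp [A]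
  · show ψ (φ bG) = bG
    rw [φ_b, ψ, SemidirectProduct.lift_inr, ψ₂_apply, zpow_one]

end Lamp2


/-- The group presented by two generators `a, b` subject to the relations
`[a, bᵏ a b⁻ᵏ] = 1` for all `k ∈ ℤ` is isomorphic to the restricted wreath
product `ℤ ≀ ℤ = (⊕_{k∈ℤ} ℤ) ⋊ ℤ`, where `ℤ` acts on finitely supported
functions `ℤ → ℤ` by shifting the index. -/
theorem presentedGroup_lamplighterRels_iso_wreath_int_int :
    Nonempty (PresentedGroup lamplighterRels ≃*
      (Multiplicative (ℤ →₀ ℤ)) ⋊[lamplighterShift] Multiplicative ℤ) := by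
  exact ⟨MonoidHom.toMulEquiv Lamp2.φ Lamp2.ψ Lamp2.ψφ Lamp2.φψ⟩
end

section
/- Let G be an infinite group, n a natural number, and let 1 = Gₙ ≤ Gₙ₋₁ ≤ ⋯ ≤ G₁ ≤ G₀ ≤ G be a chain of subgroups such that each Gᵢ is normal in G, the quotient G/G₀ is finite, and for each i = 1, …, n the quotient group Gᵢ₋₁/Gᵢ is finitely generated and abelian. Then G has a normal subgroup N such that the quotient group G/N is infinite, finitely generated, and contains an abelian subgroup of finite index. -/
/-- Let `G` be an infinite group with a chain of normal subgroups
`1 = Gₙ ≤ Gₙ₋₁ ≤ ⋯ ≤ G₁ ≤ G₀ ≤ G` such that `G/G₀` is finite and each quotient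
`Gᵢ₋₁/Gᵢ` is finitely generated abelian. Then `G` has a normal subgroup `N`
whose quotient `G/N` is infinite, finitely generated, and virtually abelian. -/
theorem exists_infinite_fg_virtually_abelian_quotient
    (G : Type*) [Group G] [Infinite G] (n : ℕ)
    (Gc : Fin (n + 1) → Subgroup G)
    (hnormal : ∀ i, (Gc i).Normal)
    (hchain : ∀ i : Fin n, Gc i.succ ≤ Gc i.castSucc)
    (hlast : Gc (Fin.last n) = ⊥)
    (hfin : Finite (G ⧸ Gc 0))
    (hab : ∀ i : Fin n, ∀ a ∈ Gc i.castSucc, ∀ b ∈ Gc i.castSucc,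
      a * b * a⁻¹ * b⁻¹ ∈ Gc i.succ)
    (hfg : ∀ i : Fin n, ∃ S : Finset G, ↑S ⊆ (Gc i.castSucc : Set G) ∧
      ∀ g ∈ Gc i.castSucc, g ∈ Subgroup.closure (↑S ∪ (Gc i.succ : Set G))) :
    ∃ N : Subgroup G, N.Normal ∧
      Infinite (G ⧸ N) ∧
      (∃ S : Finset G, Subgroup.closure (↑S ∪ (N : Set G)) = ⊤) ∧
      (∃ A : Subgroup G, N ≤ A ∧ A.FiniteIndex ∧
        ∀ a ∈ A, ∀ b ∈ A, a * b * a⁻¹ * b⁻¹ ∈ N) := by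
  classical
  have hbot : Infinite (G ⧸ Gc (Fin.last n)) := by
    rw [hlast]
    exact (QuotientGroup.quotientBot (G := G)).toEquiv.infinite_iff.mpr ‹Infinite G›
  have hP : ∃ k, ∃ h : k < n + 1, Infinite (G ⧸ Gc ⟨k, h⟩) :=
    ⟨n, n.lt_succ_self, by simpa [Fin.last] using hbot⟩
  obtain ⟨hmlt, hminf⟩ := Nat.find_spec hP
  set m := Nat.find hP with hm
  have hm0 : 0 < m := by
    rcases Nat.eq_zero_or_pos m with h | h
    · exfalso
      have heq : (⟨m, hmlt⟩ : Fin (n + 1)) = 0 := by ext; simp [h]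
      rw [heq] at hminf
      exact not_finite (G ⧸ Gc 0)
    · exact h
  obtain ⟨j, hj⟩ : ∃ j, m = j + 1 := ⟨m - 1, by omega⟩
  have hjn : j < n := by omega
  set jf : Fin n := ⟨j, hjn⟩ with hjf
  have hsucc : (⟨m, hmlt⟩ : Fin (n + 1)) = jf.succ := by
    ext; simp [hj, hjf]
  rw [hsucc] at hminf
  have hfinA : Finite (G ⧸ Gc jf.castSucc) := by
    by_contra hcon
    rw [not_finite_iff_infinite] at hcon
    exact Nat.find_min hP (show j < m by omega) ⟨by omega, hcon⟩
  refine ⟨Gc jf.succ, hnormal _, hminf, ?_, Gc jf.castSucc, hchain jf, ?_, hab jf⟩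
  · obtain ⟨S, hS₁, hS₂⟩ := hfg jf
    haveI := hnormal jf.castSucc
    haveI : Fintype (G ⧸ Gc jf.castSucc) := Fintype.ofFinite _
    refine ⟨(Finset.univ : Finset (G ⧸ Gc jf.castSucc)).image Quotient.out ∪ S, ?_⟩
    rw [eq_top_iff]
    intro g _
    set t : G := (QuotientGroup.mk (s := Gc jf.castSucc) g).out with htdef
    have htmem : t⁻¹ * g ∈ Gc jf.castSucc := by
      rw [← QuotientGroup.eq]
      exact Quotient.out_eq _
    have ht : t ∈ Subgroup.closure
        (↑((Finset.univ : Finset (G ⧸ Gc jf.castSucc)).image Quotient.out ∪ S)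
          ∪ (Gc jf.succ : Set G)) := by
      apply Subgroup.subset_closure
      left
      simp only [Finset.coe_union, Set.mem_union, Finset.coe_image, Set.mem_image]
      left
      exact ⟨_, by simp, rfl⟩
    have hrest : t⁻¹ * g ∈ Subgroup.closure
        (↑((Finset.univ : Finset (G ⧸ Gc jf.castSucc)).image Quotient.out ∪ S)
          ∪ (Gc jf.succ : Set G)) := by
      refine Subgroup.closure_mono ?_ (hS₂ _ htmem)
      apply Set.union_subset_union_left
      intro x hx
      simp only [Finset.coe_union, Set.mem_union]
      exact Or.inr hx
    have : t * (t⁻¹ * g) ∈ _ := mul_mem ht hrest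
    simpa using this
  · haveI := hnormal jf.castSucc
    exact Subgroup.finiteIndex_of_finite_quotient
end
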